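/- Let B = ⟨a, b ∣ a b a⁻¹ b = 1⟩ be the Klein bottle group. Then for every automorphism φ of B there exists j ∈ ℤ such that φ(a) = a bʲ or φ(a) = a⁻¹ bʲ. -/

import Mathlib

/-- The single relator `a * b * a⁻¹ * b` of the Klein bottle group,
where `a = FreeGroup.of 0` and `b = FreeGroup.of 1`. -/
def kleinBottleRels : Set (FreeGroup (Fin 2)) :=
  {FreeGroup.of 0 * FreeGroup.of 1 * (FreeGroup.of 0)⁻¹ * FreeGroup.of 1}

/-- The Klein bottle group `B = ⟨a, b ∣ a b a⁻¹ b = 1⟩`. -/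
abbrev KleinBottleGroup : Type := PresentedGroup kleinBottleRels

/-- The generator `a` of the Klein bottle group. -/
def kleinA : KleinBottleGroup := PresentedGroup.of 0

/-- The generator `b` of the Klein bottle group. -/
def kleinB : KleinBottleGroup := PresentedGroup.of 1

lemma klein_rel : kleinA * kleinB * kleinA⁻¹ * kleinB = 1 := by
  have h : (PresentedGroup.mk kleinBottleRels
      (FreeGroup.of 0 * FreeGroup.of 1 * (FreeGroup.of 0)⁻¹ * FreeGroup.of 1)) = 1 := by
    refine (QuotientGroup.eq_one_iff _).mpr ?_
    exact Subgroup.subset_normalClosure rfl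
  simpa [kleinA, kleinB, PresentedGroup.of, map_mul, map_inv] using h

lemma klein_conj : kleinA * kleinB * kleinA⁻¹ = kleinB⁻¹ := by
  have h := klein_rel
  rw [mul_eq_one_iff_eq_inv] at h
  exact h

lemma klein_conj_zpow (n : ℤ) : kleinA * kleinB ^ n * kleinA⁻¹ = kleinB ^ (-n) := by
  have : kleinA * kleinB ^ n * kleinA⁻¹ = (kleinA * kleinB * kleinA⁻¹) ^ n := by
    rw [conj_zpow]
  rw [this, klein_conj, ← zpow_neg_one, ← zpow_mul]
  ring_nf

lemma klein_conj_inv_zpow (n : ℤ) : kleinA⁻¹ * kleinB ^ n * kleinA = kleinB ^ (-n) := by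
  have h := klein_conj_zpow (-n)
  rw [neg_neg] at h
  rw [← h]
  group

lemma klein_comm (j : ℤ) : kleinB ^ j * kleinA = kleinA * kleinB ^ (-j) := by
  have h := klein_conj_inv_zpow j
  rw [← h]; group

lemma klein_comm_inv (j : ℤ) : kleinB ^ j * kleinA⁻¹ = kleinA⁻¹ * kleinB ^ (-j) := by
  have h := klein_conj_zpow j
  rw [← h]; group

lemma klein_swap (m n : ℤ) : ∃ n' : ℤ, kleinA ^ m * kleinB ^ n = kleinB ^ n' * kleinA ^ m := by
  induction m using Int.induction_on with
  | zero => exact ⟨n, by simp⟩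
  | succ k ih =>
    obtain ⟨n', h⟩ := ih
    refine ⟨-n', ?_⟩
    have step : kleinA * kleinB ^ n' = kleinB ^ (-n') * kleinA := by
      have := klein_comm (-n'); rw [neg_neg] at this; exact this.symm
    calc kleinA ^ ((k : ℤ) + 1) * kleinB ^ n = kleinA * (kleinA ^ (k : ℤ) * kleinB ^ n) := by
          rw [zpow_add, zpow_one]; group
      _ = kleinA * (kleinB ^ n' * kleinA ^ (k : ℤ)) := by rw [h]
      _ = (kleinA * kleinB ^ n') * kleinA ^ (k : ℤ) := by group
      _ = kleinB ^ (-n') * kleinA ^ ((k : ℤ) + 1) := by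
          rw [step, zpow_add, zpow_one]; group
  | pred k ih =>
    obtain ⟨n', h⟩ := ih
    refine ⟨-n', ?_⟩
    have step : kleinA⁻¹ * kleinB ^ n' = kleinB ^ (-n') * kleinA⁻¹ := by
      have := klein_comm_inv (-n'); rw [neg_neg] at this; exact this.symm
    calc kleinA ^ (-(k : ℤ) - 1) * kleinB ^ n
        = kleinA⁻¹ * (kleinA ^ (-(k : ℤ)) * kleinB ^ n) := by
          rw [sub_eq_add_neg, zpow_add, zpow_neg_one]; group
      _ = kleinA⁻¹ * (kleinB ^ n' * kleinA ^ (-(k : ℤ))) := by rw [h]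
      _ = (kleinA⁻¹ * kleinB ^ n') * kleinA ^ (-(k : ℤ)) := by group
      _ = kleinB ^ (-n') * kleinA ^ (-(k : ℤ) - 1) := by
          rw [step, sub_eq_add_neg, zpow_add, zpow_neg_one]; group

lemma klein_nf (x : KleinBottleGroup) : ∃ m n : ℤ, x = kleinB ^ n * kleinA ^ m := by
  induction x using PresentedGroup.induction_on with
  | H z =>
    induction z using FreeGroup.induction_on with
    | C1 => exact ⟨0, 0, by simp⟩
    | of i =>
      fin_cases i
      · exact ⟨1, 0, by simp [kleinA, PresentedGroup.of]⟩
      · exact ⟨0, 1, by simp [kleinB, PresentedGroup.of]⟩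
    | inv_of i ih =>
      obtain ⟨m, n, h⟩ := ih
      obtain ⟨n', hs⟩ := klein_swap (-m) (-n)
      refine ⟨-m, n', ?_⟩
      rw [map_inv, h, mul_inv_rev, ← zpow_neg, ← zpow_neg, hs]
    | mul y z ihy ihz =>
      obtain ⟨m, n, hy⟩ := ihy
      obtain ⟨m', n', hz⟩ := ihz
      obtain ⟨n'', hs⟩ := klein_swap m n'
      refine ⟨m + m', n + n'', ?_⟩
      rw [map_mul, hy, hz]
      calc kleinB ^ n * kleinA ^ m * (kleinB ^ n' * kleinA ^ m')
          = kleinB ^ n * (kleinA ^ m * kleinB ^ n') * kleinA ^ m' := by group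
        _ = kleinB ^ n * (kleinB ^ n'' * kleinA ^ m) * kleinA ^ m' := by rw [hs]
        _ = kleinB ^ (n + n'') * kleinA ^ (m + m') := by rw [zpow_add, zpow_add]; group

def kleinDeg : KleinBottleGroup →* Multiplicative ℤ :=
  PresentedGroup.toGroup (f := fun i : Fin 2 => if i = 0 then Multiplicative.ofAdd 1 else 1)
    (by
      intro r hr
      rw [kleinBottleRels, Set.mem_singleton_iff] at hr
      subst hr
      simp [map_mul, map_inv])

lemma kleinDeg_a : kleinDeg kleinA = Multiplicative.ofAdd 1 := by
  simpa [kleinDeg, kleinA] using PresentedGroup.toGroup.of _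

lemma kleinDeg_b : kleinDeg kleinB = 1 := by
  simpa [kleinDeg, kleinB] using PresentedGroup.toGroup.of _


/-- For every automorphism `φ` of the Klein bottle group there is `j : ℤ` with
`φ a = a * b ^ j` or `φ a = a⁻¹ * b ^ j`. -/
theorem kleinBottle_aut_a (φ : KleinBottleGroup ≃* KleinBottleGroup) :
    ∃ j : ℤ, φ kleinA = kleinA * kleinB ^ j ∨ φ kleinA = kleinA⁻¹ * kleinB ^ j := by
  -- φ b is conjugate to its inverse, so its degree is trivial
  have hb : kleinDeg (φ kleinB) = 1 := by
    have hc : φ kleinA * φ kleinB * (φ kleinA)⁻¹ = (φ kleinB)⁻¹ := by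
      rw [← map_inv, ← map_inv, ← map_mul, ← map_mul]
      exact congrArg φ klein_conj
    have := congrArg kleinDeg hc
    rw [map_inv, map_mul, map_mul, map_inv] at this
    have h2 : kleinDeg (φ kleinB) * kleinDeg (φ kleinB) = 1 := by
      have hcomm : kleinDeg (φ kleinA) * kleinDeg (φ kleinB) * (kleinDeg (φ kleinA))⁻¹
          = kleinDeg (φ kleinB) := by
        rw [mul_comm (kleinDeg (φ kleinA))]
        group
      rw [hcomm] at this
      nth_rewrite 1 [this]
      exact inv_mul_cancel _
    have : Multiplicative.toAdd (kleinDeg (φ kleinB)) + Multiplicative.toAdd (kleinDeg (φ kleinB)) = 0 := by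
      have := congrArg Multiplicative.toAdd h2
      simpa using this
    have h0 : Multiplicative.toAdd (kleinDeg (φ kleinB)) = 0 := by omega
    have := congrArg Multiplicative.ofAdd h0
    simpa using this
  -- degree of φ a is ±1
  obtain ⟨m, n, hx⟩ := klein_nf (φ.symm kleinA)
  have ha : φ (φ.symm kleinA) = kleinA := φ.apply_symm_apply kleinA
  rw [hx] at ha
  have hdeg : kleinDeg (φ kleinA) ^ m = Multiplicative.ofAdd 1 := by
    have := congrArg kleinDeg ha
    simp only [map_mul, map_zpow, hb, kleinDeg_a, one_zpow, one_mul] at this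
    exact this
  set k : ℤ := Multiplicative.toAdd (kleinDeg (φ kleinA)) with hk
  have hmk : m * k = 1 := by
    have := congrArg Multiplicative.toAdd hdeg
    simpa [toAdd_zpow, ← hk] using this
  have hkpm : k = 1 ∨ k = -1 := by
    rcases Int.isUnit_iff.mp (IsUnit.of_mul_eq_one (a := k) m (by linarith [hmk] )) with h | h
    · exact Or.inl h
    · exact Or.inr h
  -- normal form of φ a
  obtain ⟨m₀, n₀, hfa⟩ := klein_nf (φ kleinA)
  have hm₀ : m₀ = k := by
    have := congrArg kleinDeg hfa
    rw [map_mul, map_zpow, map_zpow, kleinDeg_a, kleinDeg_b] at this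
    have := congrArg Multiplicative.toAdd this
    have h' : m₀ * 1 = k := by simpa [toAdd_zpow, ← hk] using this.symm
    simpa using h'
  rcases hkpm with h1 | h1
  · refine ⟨-n₀, Or.inl ?_⟩
    rw [hfa, hm₀, h1, zpow_one]
    have := klein_comm n₀
    rw [this]
  · refine ⟨-n₀, Or.inr ?_⟩
    rw [hfa, hm₀, h1, zpow_neg_one]
    exact klein_comm_inv n₀
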